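/- Let b ≥ 2, k ≥ 1, j ≥ 1. The characteristic polynomial of the adjacency matrix of the astute graph G_{k−1,j} (nodes A^{k−1} × ℤ/jℤ, |A| = b) equals x^{j(b^{k−1} − 1)} · (x^j − b^j). -/

import Mathlib

/-- The target of the edge of the astute graph `G_{s,n}` leaving the node `p`
with label `a`: the word of `p` is shifted one place (dropping its first symbol
and appending `a`) and the counter is increased by one modulo `n`. -/
def astuteStep (b s n : ℕ) (p : (Fin s → Fin b) × ZMod n) (a : Fin b) :
    (Fin s → Fin b) × ZMod n :=
  (fun i => if h : (i : ℕ) + 1 < s then p.1 ⟨(i : ℕ) + 1, h⟩ else a, p.2 + 1)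

namespace AstuteAux

open Polynomial Matrix Finset Equiv

set_option synthInstance.maxHeartbeats 1000000
set_option maxHeartbeats 1000000



variable {m n : Type*} [Fintype m] [Fintype n] [DecidableEq m] [DecidableEq n]

lemma det_smul_one_sub_comm {K : Type*} [Field K] (x : K) (hx : x ≠ 0)
    (A : Matrix m n K) (B : Matrix n m K) :
    x ^ (Fintype.card n) * (x • (1 : Matrix m m K) - A * B).det =
      x ^ (Fintype.card m) * (x • (1 : Matrix n n K) - B * A).det := by
  have h1 : x • (1 : Matrix m m K) - A * B = x • ((1 : Matrix m m K) - (x⁻¹ • A) * B) := by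
    rw [Matrix.smul_mul, smul_sub, smul_smul, mul_inv_cancel₀ hx, one_smul]
  have h2 : x • (1 : Matrix n n K) - B * A = x • ((1 : Matrix n n K) - B * (x⁻¹ • A)) := by
    rw [Matrix.mul_smul, smul_sub, smul_smul, mul_inv_cancel₀ hx, one_smul]
  rw [h1, h2, Matrix.det_smul, Matrix.det_smul, Matrix.det_one_sub_mul_comm]
  ring

lemma charmatrix_map_ratfunc {F : Type*} [Field F] (M : Matrix m m F) :
    (charmatrix M).map (algebraMap F[X] (RatFunc F)) =
      (RatFunc.X : RatFunc F) • (1 : Matrix m m (RatFunc F)) -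
        M.map (algebraMap F (RatFunc F)) := by
  ext i k
  simp only [Matrix.map_apply, charmatrix_apply, map_sub, Matrix.sub_apply,
    Matrix.smul_apply, Matrix.one_apply, RatFunc.algebraMap_C]
  by_cases h : i = k <;>
    simp [h, RatFunc.algebraMap_X, Matrix.diagonal_apply, smul_eq_mul]

lemma algebraMap_charpoly_ratfunc {F : Type*} [Field F] (M : Matrix m m F) :
    algebraMap F[X] (RatFunc F) M.charpoly =
      ((RatFunc.X : RatFunc F) • (1 : Matrix m m (RatFunc F)) -
        M.map (algebraMap F (RatFunc F))).det := by
  rw [Matrix.charpoly, RingHom.map_det, RingHom.mapMatrix_apply, charmatrix_map_ratfunc]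

lemma charpoly_mul_comm_field {F : Type*} [Field F] (A : Matrix m n F) (B : Matrix n m F) :
    X ^ (Fintype.card n) * (A * B).charpoly = X ^ (Fintype.card m) * (B * A).charpoly := by
  apply RatFunc.algebraMap_injective F
  rw [_root_.map_mul, _root_.map_mul, map_pow, map_pow, RatFunc.algebraMap_X,
    algebraMap_charpoly_ratfunc, algebraMap_charpoly_ratfunc,
    Matrix.map_mul, Matrix.map_mul]
  exact det_smul_one_sub_comm RatFunc.X RatFunc.X_ne_zero _ _

lemma charpoly_mul_comm_int (A : Matrix m n ℤ) (B : Matrix n m ℤ) :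
    X ^ (Fintype.card n) * (A * B).charpoly = X ^ (Fintype.card m) * (B * A).charpoly := by
  apply Polynomial.map_injective (Int.castRingHom ℚ) (Int.cast_injective)
  have := charpoly_mul_comm_field (A.map (Int.castRingHom ℚ)) (B.map (Int.castRingHom ℚ))
  rw [← Matrix.map_mul, ← Matrix.map_mul, Matrix.charpoly_map, Matrix.charpoly_map] at this
  simpa [Polynomial.map_mul, Polynomial.map_pow] using this


variable {j : ℕ}


def cMat (b j : ℕ) : Matrix (ZMod j) (ZMod j) ℤ :=
  Matrix.of fun p q => if q = p + 1 then (b : ℤ) else 0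

lemma one_ne_zero_zmod (h2 : 2 ≤ j) : (1 : ZMod j) ≠ 0 := by
  intro h
  have hdvd : (j : ℕ) ∣ 1 := by
    rw [← ZMod.natCast_eq_zero_iff]
    exact_mod_cast h
  have := Nat.dvd_one.mp hdvd
  omega

lemma subRight_pow (nn : ℕ) : ∀ (x : ZMod j),
    ((Equiv.subRight (1 : ZMod j)) ^ nn) x = x - nn := by
  induction nn with
  | zero => intro x; simp
  | succ nn ih =>
    intro x
    rw [pow_succ, Equiv.Perm.mul_apply, ih]
    simp only [Equiv.subRight_apply]
    push_cast
    ring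

lemma subRight_isCycle [NeZero j] (h2 : 2 ≤ j) :
    Equiv.Perm.IsCycle (Equiv.subRight (1 : ZMod j)) := by
  refine ⟨0, ?_, ?_⟩
  · simp only [Equiv.subRight_apply, zero_sub, ne_eq, neg_eq_zero]
    exact one_ne_zero_zmod h2
  · intro y _
    refine ⟨(((-y).val : ℕ) : ℤ), ?_⟩
    rw [zpow_natCast, subRight_pow]
    rw [ZMod.natCast_rightInverse (-y)]
    ring

lemma charpoly_cMat (b : ℕ) [NeZero j] : (cMat b j).charpoly = X ^ j - C ((b : ℤ) ^ j) := by
  rcases eq_or_lt_of_le (Nat.one_le_iff_ne_zero.mpr (NeZero.ne j)) with h1 | h2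
  · -- j = 1
    subst h1
    haveI : Unique (ZMod 1) := ⟨⟨0⟩, fun x => Subsingleton.elim x 0⟩
    rw [Matrix.charpoly, Matrix.det_unique, charmatrix_apply_eq]
    have hval : ∀ x y : ZMod 1, cMat b 1 x y = (b : ℤ) := by
      intro x y
      simp [cMat, Subsingleton.elim (x + 1 : ZMod 1) y]
    rw [pow_one, pow_one]
    congr 1
    · exact congrArg C (hval _ _)
  · -- 2 ≤ j
    have h2 : 2 ≤ j := h2
    have h10 : (1 : ZMod j) ≠ 0 := one_ne_zero_zmod h2
    set c : Equiv.Perm (ZMod j) := Equiv.subRight (1 : ZMod j) with hc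
    have hcapp : ∀ x, c x = x - 1 := fun x => Equiv.subRight_apply _ _
    have h1c : (1 : Equiv.Perm (ZMod j)) ≠ c := by
      intro h
      have := congrFun (congrArg (fun σ : Equiv.Perm (ZMod j) => (σ : ZMod j → ZMod j)) h) 0
      simp only [Equiv.Perm.coe_one, id_eq] at this
      rw [hcapp] at this
      apply h10
      rwa [zero_sub, eq_comm, neg_eq_zero] at this
    rw [Matrix.charpoly, Matrix.det_apply]
    rw [← Finset.sum_subset (Finset.subset_univ ({1, c} : Finset (Equiv.Perm (ZMod j)))) ?_]
    · rw [Finset.sum_pair h1c]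
      have hterm1 : Equiv.Perm.sign (1 : Equiv.Perm (ZMod j)) •
          ∏ i, charmatrix (cMat b j) ((1 : Equiv.Perm (ZMod j)) i) i = X ^ j := by
        have hdiag : ∀ i : ZMod j, charmatrix (cMat b j) i i = X := by
          intro i
          rw [charmatrix_apply_eq]
          have hz : cMat b j i i = 0 := by
            simp only [cMat, Matrix.of_apply, ite_eq_right_iff]
            intro h
            exact absurd (by rwa [left_eq_add] at h) h10
          rw [hz, map_zero, sub_zero]
        simp only [Equiv.Perm.coe_one, id_eq, hdiag, Finset.prod_const,
          Finset.card_univ, ZMod.card]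
        rw [Equiv.Perm.sign_one, one_smul]
      have htermc : Equiv.Perm.sign c • ∏ i, charmatrix (cMat b j) (c i) i
          = - C ((b : ℤ) ^ j) := by
        have hfac : ∀ i : ZMod j, charmatrix (cMat b j) (c i) i = - C (b : ℤ) := by
          intro i
          have hne : c i ≠ i := by
            rw [hcapp]
            intro h
            exact h10 ((sub_eq_self).mp h)
          rw [charmatrix_apply, Matrix.diagonal_apply_ne _ hne, zero_sub]
          congr 1
          simp [cMat, hcapp]
        have hsupp : c.support = Finset.univ := by
          ext y
          simp only [Equiv.Perm.mem_support, Finset.mem_univ, iff_true, hcapp]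
          intro h
          exact h10 ((sub_eq_self).mp h)
        have hsign : Equiv.Perm.sign c = - (-1) ^ j := by
          rw [Equiv.Perm.IsCycle.sign (subRight_isCycle h2), hsupp,
            Finset.card_univ, ZMod.card]
        rw [hsign]
        simp only [hfac, Finset.prod_const, Finset.card_univ, ZMod.card]
        have hpow : ((- C ((b:ℕ):ℤ))^j : ℤ[X]) = (-1)^j * C (((b:ℕ):ℤ)^j) := by
          rw [neg_pow, C_pow]
        rw [hpow, Units.smul_def, zsmul_eq_mul]
        push_cast
        rw [← mul_assoc, neg_mul, ← mul_pow]
        norm_num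
      rw [hterm1, htermc]
      ring
    · intro σ _ hσ
      simp only [Finset.mem_insert, Finset.mem_singleton, not_or] at hσ
      obtain ⟨hσ1, hσc⟩ := hσ
      have hex : ∃ i : ZMod j, σ i ≠ i ∧ σ i ≠ i - 1 := by
        by_contra hcon
        push_neg at hcon
        have hall : ∀ i, σ i = i ∨ σ i = i - 1 := by
          intro i
          by_cases h : σ i = i
          · exact Or.inl h
          · exact Or.inr (hcon i h)
        apply hσc
        by_cases hexists : ∃ p, σ p ≠ p
        · obtain ⟨p, hp⟩ := hexists
          have hp1 : σ p = p - 1 := (hall p).resolve_left hp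
          have hkey : ∀ nn : ℕ, σ (p - nn) = p - nn - 1 := by
            intro nn
            induction nn with
            | zero => simpa using hp1
            | succ nn ih =>
              have hq : (p - (nn+1 : ℕ) : ZMod j) = p - nn - 1 := by
                push_cast
                ring
              rw [hq]
              rcases hall (p - (nn : ℕ) - 1) with h | h
              · exfalso
                have heq : p - (nn : ℕ) - 1 = p - (nn : ℕ) := σ.injective (by rw [h, ih])
                exact h10 ((sub_eq_self).mp heq)
              · exact h
          ext y
          have hy : p - (((p - y).val : ℕ) : ZMod j) = y := by
            rw [ZMod.natCast_rightInverse (p - y)]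
            ring
          have hk := hkey ((p - y).val)
          rw [hy] at hk
          rw [hk, hcapp]
        · push_neg at hexists
          exact absurd (Equiv.ext fun x => hexists x) hσ1
      obtain ⟨i, hi1, hi2⟩ := hex
      have hzero : charmatrix (cMat b j) (σ i) i = 0 := by
        rw [charmatrix_apply, Matrix.diagonal_apply_ne _ hi1]
        have hz : cMat b j (σ i) i = 0 := by
          simp only [cMat, Matrix.of_apply, ite_eq_right_iff]
          intro h
          exfalso
          apply hi2
          conv_rhs => rw [h]
          ring
        rw [hz, map_zero, zero_sub, neg_zero]
      have hprod : ∏ i : ZMod j, charmatrix (cMat b j) (σ i) i = 0 :=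
        Finset.prod_eq_zero (Finset.mem_univ i) hzero
      rw [hprod, smul_zero]




variable {b j s : ℕ}

/-- tail of an edge -/
def tl (e : (Fin (s+1) → Fin b) × ZMod j) : (Fin s → Fin b) × ZMod j :=
  (fun i => e.1 i.castSucc, e.2)

/-- head of an edge -/
def hd (e : (Fin (s+1) → Fin b) × ZMod j) : (Fin s → Fin b) × ZMod j :=
  (fun i => e.1 i.succ, e.2 + 1)

def aMat (b j s : ℕ) : Matrix ((Fin s → Fin b) × ZMod j) ((Fin s → Fin b) × ZMod j) ℤ :=
  Matrix.of fun p q =>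
    ((Finset.univ.filter (fun a : Fin b => astuteStep b s j p a = q)).card : ℤ)

def tMat (b j s : ℕ) :
    Matrix ((Fin (s+1) → Fin b) × ZMod j) ((Fin s → Fin b) × ZMod j) ℤ :=
  Matrix.of fun e p => if tl e = p then 1 else 0

def hMat (b j s : ℕ) :
    Matrix ((Fin (s+1) → Fin b) × ZMod j) ((Fin s → Fin b) × ZMod j) ℤ :=
  Matrix.of fun e p => if hd e = p then 1 else 0

lemma step_eq_snoc (e : (Fin (s+1) → Fin b) × ZMod j) (a : Fin b) :
    astuteStep b (s+1) j e a = (Fin.snoc (hd e).1 a, (hd e).2) := by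
  unfold astuteStep hd
  refine Prod.ext ?_ rfl
  show _ = Fin.snoc (α := fun _ => Fin b) (fun i : Fin s => e.1 i.succ) a
  funext i
  refine Fin.lastCases ?_ (fun i' => ?_) i
  · show (if h : (Fin.last s : ℕ) + 1 < s + 1 then e.1 ⟨_, h⟩ else a) = _
    rw [Fin.snoc_last, dif_neg (by simp)]
  · have h : ((i'.castSucc : Fin (s+1)) : ℕ) + 1 < s + 1 := by simp
    have h2 : (⟨((i'.castSucc : Fin (s+1)) : ℕ) + 1, h⟩ : Fin (s+1)) = i'.succ := by
      ext; simp
    show (if h : ((i'.castSucc : Fin (s+1)) : ℕ) + 1 < s + 1 then e.1 ⟨_, h⟩ else a) = _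
    rw [Fin.snoc_castSucc, dif_pos h, h2]


lemma step_eq_iff (e : (Fin (s+1) → Fin b) × ZMod j) (a : Fin b)
    (e' : (Fin (s+1) → Fin b) × ZMod j) :
    astuteStep b (s+1) j e a = e' ↔ (hd e = tl e' ∧ a = e'.1 (Fin.last s)) := by
  rw [step_eq_snoc, Prod.ext_iff]
  dsimp only
  constructor
  · rintro ⟨h1, h2⟩
    refine ⟨Prod.ext ?_ h2, ?_⟩
    · funext i
      have := congrFun h1 i.castSucc
      rwa [Fin.snoc_castSucc] at this
    · have := congrFun h1 (Fin.last s)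
      rwa [Fin.snoc_last] at this
  · rintro ⟨h1, h2⟩
    have hw : (hd e).1 = fun i : Fin s => e'.1 i.castSucc := congrArg Prod.fst h1
    refine ⟨?_, congrArg Prod.snd h1⟩
    funext i
    refine Fin.lastCases ?_ (fun i' => ?_) i
    · rw [Fin.snoc_last, h2]
    · rw [Fin.snoc_castSucc, hw]

lemma tl_snoc (p : (Fin s → Fin b) × ZMod j) (a : Fin b) :
    tl (Fin.snoc p.1 a, p.2) = p := by
  refine Prod.ext ?_ rfl
  funext i
  show (Fin.snoc p.1 a : Fin (s+1) → Fin b) i.castSucc = p.1 i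
  exact Fin.snoc_castSucc _ _ _

lemma hd_snoc (p : (Fin s → Fin b) × ZMod j) (a : Fin b) :
    hd (Fin.snoc p.1 a, p.2) = astuteStep b s j p a := by
  refine Prod.ext ?_ rfl
  funext i
  show (Fin.snoc p.1 a : Fin (s+1) → Fin b) i.succ = if h : (i : ℕ) + 1 < s then p.1 ⟨(i : ℕ) + 1, h⟩ else a
  by_cases h : (i : ℕ) + 1 < s
  · have h2 : i.succ = Fin.castSucc ⟨(i : ℕ) + 1, h⟩ := by ext; simp
    rw [h2, Fin.snoc_castSucc, dif_pos h]
  · have h2 : i.succ = Fin.last s := by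
      ext; simp only [Fin.val_succ, Fin.val_last]; omega
    rw [h2, Fin.snoc_last, dif_neg h]

variable [NeZero j]

lemma factor1 : aMat b j (s+1) = hMat b j s * (tMat b j s)ᵀ := by
  ext e e'
  rw [Matrix.mul_apply]
  have hsum : ∀ p, hMat b j s e p * (tMat b j s)ᵀ p e' =
      if hd e = p then (if tl e' = p then (1:ℤ) else 0) else 0 := by
    intro p
    simp only [hMat, tMat, Matrix.transpose_apply, Matrix.of_apply]
    by_cases h : hd e = p <;> simp [h]
  simp only [hsum]
  rw [Finset.sum_ite_eq (Finset.univ) (hd e) (fun p => if tl e' = p then (1:ℤ) else 0)]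
  simp only [Finset.mem_univ, if_true]
  show ((Finset.univ.filter (fun a : Fin b => astuteStep b (s+1) j e a = e')).card : ℤ) = _
  by_cases h : hd e = tl e'
  · rw [if_pos h.symm]
    have : Finset.univ.filter (fun a : Fin b => astuteStep b (s+1) j e a = e') =
        {e'.1 (Fin.last s)} := by
      ext a
      simp [step_eq_iff, h]
    rw [this, Finset.card_singleton, Nat.cast_one]
  · rw [if_neg (fun hh => h hh.symm)]
    have : Finset.univ.filter (fun a : Fin b => astuteStep b (s+1) j e a = e') = ∅ := by
      ext a
      simp only [Finset.mem_filter, Finset.mem_univ, true_and, Finset.notMem_empty,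
        iff_false, step_eq_iff]
      tauto
    rw [this, Finset.card_empty, Nat.cast_zero]

lemma factor2 : (tMat b j s)ᵀ * hMat b j s = aMat b j s := by
  ext p q
  rw [Matrix.mul_apply]
  have hsum : ∀ e, (tMat b j s)ᵀ p e * hMat b j s e q =
      if tl e = p ∧ hd e = q then (1:ℤ) else 0 := by
    intro e
    simp only [hMat, tMat, Matrix.transpose_apply, Matrix.of_apply]
    by_cases h1 : tl e = p <;> by_cases h2 : hd e = q <;> simp [h1, h2]
  simp only [hsum]
  rw [Finset.sum_boole]
  show _ = ((Finset.univ.filter (fun a : Fin b => astuteStep b s j p a = q)).card : ℤ)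
  congr 1
  refine (Finset.card_bij (fun a _ => ((Fin.snoc p.1 a, p.2) :
      (Fin (s+1) → Fin b) × ZMod j)) ?_ ?_ ?_).symm
  · intro a ha
    simp only [Finset.mem_filter, Finset.mem_univ, true_and] at ha ⊢
    exact ⟨tl_snoc p a, by rw [hd_snoc]; exact ha⟩
  · intro a _ a' _ hh
    have := congrFun (congrArg Prod.fst hh) (Fin.last s)
    simpa using this
  · intro e he
    simp only [Finset.mem_filter, Finset.mem_univ, true_and] at he
    obtain ⟨h1, h2⟩ := he
    have hfst : e.1 = Fin.snoc p.1 (e.1 (Fin.last s)) := by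
      funext i
      refine Fin.lastCases ?_ (fun i' => ?_) i
      · rw [Fin.snoc_last]
      · rw [Fin.snoc_castSucc]
        exact (congrFun (congrArg Prod.fst h1) i')
    have hsnd : e.2 = p.2 := congrArg Prod.snd h1
    have he2 : (Fin.snoc p.1 (e.1 (Fin.last s)), p.2) = e := by
      rw [← hfst, ← hsnd]
    refine ⟨e.1 (Fin.last s), ?_, he2⟩
    simp only [Finset.mem_filter, Finset.mem_univ, true_and]
    rw [← hd_snoc p (e.1 (Fin.last s)), he2, h2]



lemma aMat_zero_charpoly (b j : ℕ) [NeZero j] :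
    (aMat b j 0).charpoly = X ^ j - C ((b : ℤ) ^ j) := by
  have hre : Matrix.reindex ((Equiv.uniqueProd (ZMod j) (Fin 0 → Fin b)).symm)
      ((Equiv.uniqueProd (ZMod j) (Fin 0 → Fin b)).symm) (cMat b j) = aMat b j 0 := by
    ext p q
    simp only [Matrix.reindex_apply, Matrix.submatrix_apply, Equiv.symm_symm,
      Equiv.uniqueProd_apply, cMat, aMat, Matrix.of_apply]
    have hstep : ∀ a : Fin b, astuteStep b 0 j p a = q ↔ q.2 = p.2 + 1 := by
      intro a
      constructor
      · intro h
        rw [← h]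
        rfl
      · intro h
        refine Prod.ext ?_ h.symm
        funext i
        exact i.elim0
    by_cases h : q.2 = p.2 + 1
    · rw [if_pos h]
      have : Finset.univ.filter (fun a : Fin b => astuteStep b 0 j p a = q) =
          Finset.univ := by
        ext a
        simp [hstep, h]
      rw [this, Finset.card_univ, Fintype.card_fin]
    · rw [if_neg h]
      have : Finset.univ.filter (fun a : Fin b => astuteStep b 0 j p a = q) = ∅ := by
        ext a
        simp [hstep, h]
      rw [this, Finset.card_empty, Nat.cast_zero]
  rw [← hre, Matrix.charpoly_reindex, charpoly_cMat]

lemma aMat_charpoly (b j : ℕ) (hb : 1 ≤ b) [NeZero j] : ∀ s,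
    (aMat b j s).charpoly = X ^ (j * (b ^ s - 1)) * (X ^ j - C ((b : ℤ) ^ j))
  | 0 => by
    rw [aMat_zero_charpoly]
    simp
  | s+1 => by
    have hkey := charpoly_mul_comm_int (hMat b j s) ((tMat b j s)ᵀ)
    rw [← factor1, factor2] at hkey
    have hn : Fintype.card ((Fin s → Fin b) × ZMod j) = b ^ s * j := by
      simp [Fintype.card_fun, ZMod.card]
    have hm : Fintype.card ((Fin (s+1) → Fin b) × ZMod j) = b ^ (s+1) * j := by
      simp [Fintype.card_fun, ZMod.card]
    rw [hn, hm, aMat_charpoly b j hb s] at hkey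
    have hXne : (X : ℤ[X]) ^ (b ^ s * j) ≠ 0 := pow_ne_zero _ Polynomial.X_ne_zero
    apply mul_left_cancel₀ hXne
    rw [hkey, ← mul_assoc, ← pow_add, ← mul_assoc, ← pow_add]
    have hexp : b ^ (s+1) * j + j * (b ^ s - 1) = b ^ s * j + j * (b ^ (s+1) - 1) := by
      have h1 : 1 ≤ b ^ s := Nat.one_le_pow _ _ (by omega)
      have h2 : b ^ s ≤ b ^ (s+1) := Nat.pow_le_pow_right (by omega) (by omega)
      rw [Nat.mul_sub, Nat.mul_sub, mul_one, mul_comm (b ^ (s+1)) j, mul_comm (b ^ s) j]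
      have h3 : j ≤ j * b ^ s := Nat.le_mul_of_pos_right j (by omega)
      have h4 : j * b ^ s ≤ j * b ^ (s+1) := Nat.mul_le_mul_left j h2
      generalize j * b ^ s = P at *
      generalize j * b ^ (s+1) = Q at *
      omega
    rw [hexp]

end AstuteAux

/-- The characteristic polynomial of the adjacency matrix of the astute graph
`G_{k−1,j}` (nodes `A^{k−1} × ℤ/jℤ`, the `(p,q)` entry counting the labels `a`
with `astuteStep p a = q`) equals `x^{j(b^{k−1} − 1)} · (x^j − b^j)`. -/
theorem charpoly_astute (b k j : ℕ) (hb : 2 ≤ b) (hk : 1 ≤ k) [NeZero j] :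
    Matrix.charpoly
      (Matrix.of fun p q : (Fin (k - 1) → Fin b) × ZMod j =>
        ((Finset.univ.filter
          (fun a : Fin b => astuteStep b (k - 1) j p a = q)).card : ℤ)) =
    Polynomial.X ^ (j * (b ^ (k - 1) - 1)) *
      (Polynomial.X ^ j - Polynomial.C ((b : ℤ) ^ j)) := by
  exact AstuteAux.aMat_charpoly b j (by omega) (k - 1)
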